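/- Let λ₁, λ₂ > 0 and for j ≥ 1 set p_j = (λ₁/λ₂)·∫₀^∞ e^{−(λ₁/λ₂)s} s^{j−1} (1+s)^{−(j+1)} ds (that is, p_j = (λ₁/λ₂)·Γ(j)·U(j,0,λ₁/λ₂)). Then for every m ∈ ℕ one has lim_{j→∞} j^m·p_j = 0, while for every ε > 0 one has lim_{j→∞} e^{εj}·p_j = +∞. -/

import Mathlib

open Filter Topology MeasureTheory

/-- Critical-regime limit distribution
`p_j = (λ₁/λ₂) ∫₀^∞ e^(-(λ₁/λ₂)s) s^(j-1) (1+s)^(-(j+1)) ds = (λ₁/λ₂) Γ(j) U(j,0,λ₁/λ₂)`. -/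
noncomputable def critP (lam1 lam2 : ℝ) (j : ℕ) : ℝ :=
  lam1 / lam2 *
    ∫ s in Set.Ioi (0:ℝ), Real.exp (-(lam1 / lam2) * s) * s ^ (j - 1) / (1 + s) ^ (j + 1)

private lemma aux_cont' (c : ℝ) (j : ℕ) :
    ContinuousOn (fun s : ℝ => Real.exp (-c * s) * s ^ (j - 1) / (1 + s) ^ (j + 1))
      (Set.Ioi 0) := by
  apply ContinuousOn.div
  · fun_prop
  · fun_prop
  · intro s hs
    have h : (0:ℝ) < 1 + s := by have := Set.mem_Ioi.mp hs; linarith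
    exact (pow_pos h _).ne'

private lemma aux_nonneg' (c : ℝ) (j : ℕ) {s : ℝ} (hs : 0 < s) :
    0 ≤ Real.exp (-c * s) * s ^ (j - 1) / (1 + s) ^ (j + 1) :=
  div_nonneg (mul_nonneg (Real.exp_pos _).le (pow_nonneg hs.le _))
    (pow_nonneg (by linarith) _)

private lemma aux_integrable' {c : ℝ} (hc : 0 < c) (j : ℕ) :
    IntegrableOn (fun s : ℝ => Real.exp (-c * s) * s ^ (j - 1) / (1 + s) ^ (j + 1))
      (Set.Ioi 0) := by
  refine (exp_neg_integrableOn_Ioi 0 hc).mono'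
    ((aux_cont' c j).aestronglyMeasurable measurableSet_Ioi) ?_
  rw [ae_restrict_iff' measurableSet_Ioi]
  filter_upwards with s hs
  have hs : (0:ℝ) < s := hs
  have h1 : (0:ℝ) < 1 + s := by linarith
  have hnum : s ^ (j - 1) ≤ (1 + s) ^ (j + 1) :=
    calc s ^ (j - 1) ≤ (1 + s) ^ (j - 1) := pow_le_pow_left₀ hs.le (by linarith) _
      _ ≤ (1 + s) ^ (j + 1) := pow_le_pow_right₀ (by linarith) (by omega)
  rw [Real.norm_eq_abs, abs_of_nonneg (aux_nonneg' c j hs), mul_div_assoc]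
  calc Real.exp (-c * s) * (s ^ (j - 1) / (1 + s) ^ (j + 1))
      ≤ Real.exp (-c * s) * 1 := by
        apply mul_le_mul_of_nonneg_left _ (Real.exp_pos _).le
        exact div_le_one_of_le₀ hnum (pow_pos h1 _).le
    _ = Real.exp (-c * s) := mul_one _

private lemma aux_upper' {c : ℝ} (hc : 0 < c) {j : ℕ} (hj : 2 ≤ j) {s : ℝ} (hs : 0 < s) :
    Real.exp (-c * s) * s ^ (j - 1) / (1 + s) ^ (j + 1) ≤
      Real.exp (c / 2) * Real.exp (-(Real.sqrt c * Real.sqrt j)) * Real.exp (-(c / 2) * s) := by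
  have h1 : (0:ℝ) < 1 + s := by linarith
  have hjc : ((j - 1 : ℕ) : ℝ) = (j : ℝ) - 1 := by
    rw [Nat.cast_sub (by omega)]; norm_num
  have hj2 : (2:ℝ) ≤ (j:ℝ) := by exact_mod_cast hj
  have e1 : Real.exp (-c * s) * s ^ (j - 1) / (1 + s) ^ (j + 1) =
      Real.exp (-c * s) * (s / (1 + s)) ^ (j - 1) * (1 / (1 + s) ^ 2) := by
    have hk : j + 1 = (j - 1) + 2 := by omega
    rw [div_pow, hk, pow_add]
    field_simp
  rw [e1]
  have hbase : s / (1 + s) ≤ Real.exp (-(1 / (1 + s))) := by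
    have h := Real.add_one_le_exp (-(1 / (1 + s)))
    have h2 : s / (1 + s) = 1 - 1 / (1 + s) := by field_simp; ring
    linarith
  have hratio : (s / (1 + s)) ^ (j - 1) ≤ Real.exp (-(((j:ℝ) - 1) / (1 + s))) := by
    calc (s / (1 + s)) ^ (j - 1) ≤ (Real.exp (-(1 / (1 + s)))) ^ (j - 1) :=
          pow_le_pow_left₀ (div_nonneg hs.le h1.le) hbase _
      _ = Real.exp (((j - 1 : ℕ) : ℝ) * -(1 / (1 + s))) := (Real.exp_nat_mul _ _).symm
      _ = Real.exp (-(((j:ℝ) - 1) / (1 + s))) := by rw [hjc]; ring_nf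
  have key : Real.sqrt c * Real.sqrt (j:ℝ) - c / 2 ≤ (c / 2) * s + ((j:ℝ) - 1) / (1 + s) := by
    set a := (c / 2) * (1 + s) with ha_def
    set b := ((j:ℝ) - 1) / (1 + s) with hb_def
    have ha : 0 ≤ a := by positivity
    have hb : 0 ≤ b := div_nonneg (by linarith) h1.le
    have amgm : 2 * (Real.sqrt a * Real.sqrt b) ≤ a + b := by
      nlinarith [sq_nonneg (Real.sqrt a - Real.sqrt b), Real.sq_sqrt ha, Real.sq_sqrt hb]
    have hab : a * b = (c / 2) * ((j:ℝ) - 1) := by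
      rw [ha_def, hb_def]; field_simp
    have h4 : Real.sqrt (c * j) ≤ 2 * Real.sqrt (a * b) := by
      rw [hab]
      have h5 : Real.sqrt (c * (j:ℝ)) ≤ Real.sqrt (4 * ((c / 2) * ((j:ℝ) - 1))) :=
        Real.sqrt_le_sqrt (by nlinarith)
      calc Real.sqrt (c * (j:ℝ)) ≤ Real.sqrt (4 * ((c / 2) * ((j:ℝ) - 1))) := h5
        _ = Real.sqrt 4 * Real.sqrt ((c / 2) * ((j:ℝ) - 1)) := Real.sqrt_mul (by norm_num) _
        _ = 2 * Real.sqrt ((c / 2) * ((j:ℝ) - 1)) := by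
            rw [show (4:ℝ) = 2 ^ 2 by norm_num, Real.sqrt_sq (by norm_num)]
    rw [← Real.sqrt_mul hc.le]
    rw [Real.sqrt_mul ha b] at h4
    have ha' : a = (c / 2) * s + c / 2 := by rw [ha_def]; ring
    nlinarith
  calc Real.exp (-c * s) * (s / (1 + s)) ^ (j - 1) * (1 / (1 + s) ^ 2)
      ≤ Real.exp (-c * s) * Real.exp (-(((j:ℝ) - 1) / (1 + s))) * 1 := by
        apply mul_le_mul
        · exact mul_le_mul_of_nonneg_left hratio (Real.exp_pos _).le
        · exact div_le_one_of_le₀ (one_le_pow₀ (by linarith)) (by positivity)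
        · positivity
        · positivity
    _ = Real.exp (-(c / 2) * s) *
        Real.exp (-((c / 2) * s + ((j:ℝ) - 1) / (1 + s))) := by
        rw [mul_one, ← Real.exp_add, ← Real.exp_add]; ring_nf
    _ ≤ Real.exp (-(c / 2) * s) *
        Real.exp (-(Real.sqrt c * Real.sqrt (j:ℝ) - c / 2)) := by
        apply mul_le_mul_of_nonneg_left _ (Real.exp_pos _).le
        exact Real.exp_le_exp.2 (by linarith)
    _ = Real.exp (c / 2) * Real.exp (-(Real.sqrt c * Real.sqrt j)) *
          Real.exp (-(c / 2) * s) := by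
        rw [← Real.exp_add, ← Real.exp_add, ← Real.exp_add]; ring_nf

private lemma aux_int_upper {c : ℝ} (hc : 0 < c) {j : ℕ} (hj : 2 ≤ j) :
    (∫ s in Set.Ioi (0:ℝ), Real.exp (-c * s) * s ^ (j - 1) / (1 + s) ^ (j + 1)) ≤
      (Real.exp (c / 2) * (∫ s in Set.Ioi (0:ℝ), Real.exp (-(c / 2) * s))) *
        Real.exp (-(Real.sqrt c * Real.sqrt j)) := by
  have hint2 : IntegrableOn
      (fun s : ℝ => Real.exp (c / 2) * Real.exp (-(Real.sqrt c * Real.sqrt j)) *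
        Real.exp (-(c / 2) * s)) (Set.Ioi 0) :=
    (exp_neg_integrableOn_Ioi 0 (half_pos hc)).const_mul _
  calc (∫ s in Set.Ioi (0:ℝ), Real.exp (-c * s) * s ^ (j - 1) / (1 + s) ^ (j + 1))
      ≤ ∫ s in Set.Ioi (0:ℝ), Real.exp (c / 2) * Real.exp (-(Real.sqrt c * Real.sqrt j)) *
          Real.exp (-(c / 2) * s) :=
        setIntegral_mono_on (aux_integrable' hc j) hint2 measurableSet_Ioi
          fun s hs => aux_upper' hc hj (Set.mem_Ioi.mp hs)
    _ = (Real.exp (c / 2) * (∫ s in Set.Ioi (0:ℝ), Real.exp (-(c / 2) * s))) *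
          Real.exp (-(Real.sqrt c * Real.sqrt j)) := by
        rw [MeasureTheory.integral_const_mul]
        ring

private lemma aux_lower' {c : ℝ} (hc : 0 < c) {j : ℕ} (hj : 4 ≤ j) {s : ℝ}
    (hs : s ∈ Set.Icc (Real.sqrt j) (Real.sqrt j + 1)) :
    Real.exp (-c) * Real.exp (-((c + 2) * Real.sqrt j)) / (2 + Real.sqrt j) ^ 2 ≤
      Real.exp (-c * s) * s ^ (j - 1) / (1 + s) ^ (j + 1) := by
  set t := Real.sqrt (j:ℝ) with ht_def
  have htsq : t ^ 2 = (j:ℝ) := Real.sq_sqrt (Nat.cast_nonneg j)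
  have hj4 : (4:ℝ) ≤ (j:ℝ) := by exact_mod_cast hj
  have ht2 : 2 ≤ t := by nlinarith [Real.sqrt_nonneg (j:ℝ)]
  obtain ⟨hs1, hs2⟩ := hs
  have hspos : 0 < s := lt_of_lt_of_le (by linarith) hs1
  have h1s : (0:ℝ) < 1 + s := by linarith
  have h1t : (0:ℝ) < 1 + t := by linarith
  have hjc : ((j - 1 : ℕ) : ℝ) = (j : ℝ) - 1 := by rw [Nat.cast_sub (by omega)]; norm_num
  have e1 : Real.exp (-c * s) * s ^ (j - 1) / (1 + s) ^ (j + 1) =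
      Real.exp (-c * s) * (s / (1 + s)) ^ (j - 1) * (1 / (1 + s) ^ 2) := by
    have hk : j + 1 = (j - 1) + 2 := by omega
    rw [div_pow, hk, pow_add]
    field_simp
  rw [e1]
  have hexp : Real.exp (-c * (t + 1)) ≤ Real.exp (-c * s) :=
    Real.exp_le_exp.2 (by nlinarith)
  have hbase : Real.exp (-(2 / (1 + t))) ≤ t / (1 + t) := by
    have h := Real.add_one_le_exp (2 / (1 + t))
    have hpos : (0:ℝ) < 2 / (1 + t) + 1 := by positivity
    have hinv : (Real.exp (2 / (1 + t)))⁻¹ ≤ (2 / (1 + t) + 1)⁻¹ :=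
      inv_anti₀ hpos (by linarith)
    rw [Real.exp_neg]
    refine le_trans hinv ?_
    rw [inv_eq_one_div, div_le_div_iff₀ hpos h1t]
    have h2 : 2 / (1 + t) + 1 = (3 + t) / (1 + t) := by field_simp; ring
    rw [h2, mul_div_assoc', le_div_iff₀ h1t]
    nlinarith
  have hratio : Real.exp (-(2 * t)) ≤ (s / (1 + s)) ^ (j - 1) := by
    have hmono : t / (1 + t) ≤ s / (1 + s) := by
      rw [div_le_div_iff₀ h1t h1s]; nlinarith
    have hp1 : (Real.exp (-(2 / (1 + t)))) ^ (j - 1) ≤ (s / (1 + s)) ^ (j - 1) :=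
      pow_le_pow_left₀ (Real.exp_pos _).le (le_trans hbase hmono) _
    refine le_trans ?_ hp1
    rw [← Real.exp_nat_mul, Real.exp_le_exp, hjc]
    rw [mul_neg, neg_le_neg_iff, mul_div_assoc', div_le_iff₀ h1t]
    nlinarith
  have hden : (1:ℝ) / (2 + t) ^ 2 ≤ 1 / (1 + s) ^ 2 := by
    apply div_le_div_of_nonneg_left one_pos.le (by positivity)
    apply pow_le_pow_left₀ (by linarith) (by linarith)
  calc Real.exp (-c) * Real.exp (-((c + 2) * t)) / (2 + t) ^ 2
      = Real.exp (-c * (t + 1)) * Real.exp (-(2 * t)) * (1 / (2 + t) ^ 2) := by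
        rw [← Real.exp_add, ← Real.exp_add]; ring_nf
    _ ≤ Real.exp (-c * s) * (s / (1 + s)) ^ (j - 1) * (1 / (1 + s) ^ 2) := by
        apply mul_le_mul _ hden (by positivity) (by positivity)
        exact mul_le_mul hexp hratio (Real.exp_pos _).le (Real.exp_pos _).le

private lemma aux_int_lower {c : ℝ} (hc : 0 < c) {j : ℕ} (hj : 4 ≤ j) :
    Real.exp (-c) * Real.exp (-((c + 2) * Real.sqrt j)) / (2 + Real.sqrt j) ^ 2 ≤
      ∫ s in Set.Ioi (0:ℝ), Real.exp (-c * s) * s ^ (j - 1) / (1 + s) ^ (j + 1) := by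
  set t := Real.sqrt (j:ℝ) with ht_def
  have htsq : t ^ 2 = (j:ℝ) := Real.sq_sqrt (Nat.cast_nonneg j)
  have hj4 : (4:ℝ) ≤ (j:ℝ) := by exact_mod_cast hj
  have ht2 : 2 ≤ t := by nlinarith [Real.sqrt_nonneg (j:ℝ)]
  have hsub : Set.Icc t (t + 1) ⊆ Set.Ioi (0:ℝ) := fun s hs => by
    have := hs.1; simp only [Set.mem_Ioi]; linarith
  set M := Real.exp (-c) * Real.exp (-((c + 2) * t)) / (2 + t) ^ 2 with hM_def
  have h0 : M = ∫ _ in Set.Icc t (t + 1), M := by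
    rw [setIntegral_const, measureReal_def, Real.volume_Icc]
    norm_num
  rw [h0]
  calc (∫ _ in Set.Icc t (t + 1), M)
      ≤ ∫ s in Set.Icc t (t + 1), Real.exp (-c * s) * s ^ (j - 1) / (1 + s) ^ (j + 1) := by
        apply setIntegral_mono_on
        · exact integrableOn_const
            (by rw [Real.volume_Icc]; exact ENNReal.ofReal_ne_top)
        · exact (aux_integrable' hc j).mono_set hsub
        · exact measurableSet_Icc
        · exact fun s hs => aux_lower' hc hj hs
    _ ≤ ∫ s in Set.Ioi (0:ℝ), Real.exp (-c * s) * s ^ (j - 1) / (1 + s) ^ (j + 1) := by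
        apply setIntegral_mono_set (aux_integrable' hc j)
        · rw [EventuallyLE, ae_restrict_iff' measurableSet_Ioi]
          filter_upwards with s hs
          exact aux_nonneg' c j hs
        · exact hsub.eventuallyLE

private lemma aux_pow_sqrt {a : ℝ} (ha : 0 < a) (m : ℕ) :
    Tendsto (fun j : ℕ => (j:ℝ) ^ m * Real.exp (-(a * Real.sqrt j))) atTop (𝓝 0) := by
  have h1 : Tendsto (fun x : ℝ => x ^ (2 * m) * Real.exp (-a * x)) atTop (𝓝 0) := by
    have h := tendsto_rpow_mul_exp_neg_mul_atTop_nhds_zero (2 * m : ℕ) a ha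
    refine h.congr' ?_
    filter_upwards [eventually_ge_atTop (0:ℝ)] with x hx
    rw [Real.rpow_natCast]
  have hs : Tendsto Real.sqrt atTop atTop := by
    rw [tendsto_atTop]
    intro b
    filter_upwards [eventually_ge_atTop (b ^ 2)] with x hx
    calc b ≤ |b| := le_abs_self b
      _ = Real.sqrt (b ^ 2) := (Real.sqrt_sq_eq_abs b).symm
      _ ≤ Real.sqrt x := Real.sqrt_le_sqrt hx
  have h2 : Tendsto (fun j : ℕ => Real.sqrt j) atTop atTop :=
    hs.comp tendsto_natCast_atTop_atTop
  refine (h1.comp h2).congr fun j => ?_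
  simp only [Function.comp_apply]
  rw [pow_mul, Real.sq_sqrt (Nat.cast_nonneg j), neg_mul]

private lemma aux_sq_le_exp {x : ℝ} (hx : 108 ≤ x) : (2 + x) ^ 2 ≤ Real.exp x := by
  have h1 : 1 + x / 3 ≤ Real.exp (x / 3) := by linarith [Real.add_one_le_exp (x / 3)]
  have h2 : (1 + x / 3) ^ 3 ≤ (Real.exp (x / 3)) ^ 3 :=
    pow_le_pow_left₀ (by linarith) h1 3
  have h3 : (Real.exp (x / 3)) ^ 3 = Real.exp x := by
    rw [← Real.exp_nat_mul]
    norm_num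
    ring_nf
  nlinarith

/-- In the critical regime the tail of `(p_j)` decays faster than any polynomial
but slower than any exponential: `j^m p_j → 0` for every `m ∈ ℕ`, while
`e^(εj) p_j → +∞` for every `ε > 0`. -/
theorem critical_intermediate_decay (lam1 lam2 : ℝ) (hlam1 : 0 < lam1) (hlam2 : 0 < lam2) :
    (∀ m : ℕ, Tendsto (fun j : ℕ => (j : ℝ) ^ m * critP lam1 lam2 j) atTop (𝓝 0)) ∧
    (∀ ε : ℝ, 0 < ε →
      Tendsto (fun j : ℕ => Real.exp (ε * j) * critP lam1 lam2 j) atTop atTop) := by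
  set c := lam1 / lam2 with hc_def
  have hc : 0 < c := div_pos hlam1 hlam2
  have hP : ∀ j : ℕ, critP lam1 lam2 j =
      c * ∫ s in Set.Ioi (0:ℝ), Real.exp (-c * s) * s ^ (j - 1) / (1 + s) ^ (j + 1) :=
    fun j => rfl
  have hPnn : ∀ j : ℕ, 0 ≤ critP lam1 lam2 j := fun j => by
    rw [hP]
    exact mul_nonneg hc.le
      (setIntegral_nonneg measurableSet_Ioi fun s hs => aux_nonneg' c j hs)
  constructor
  · intro m
    set I := ∫ s in Set.Ioi (0:ℝ), Real.exp (-(c / 2) * s) with hI_def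
    have hI : 0 ≤ I :=
      setIntegral_nonneg measurableSet_Ioi fun s _ => (Real.exp_pos _).le
    set A := c * (Real.exp (c / 2) * I) with hA_def
    have hsqrtc : 0 < Real.sqrt c := Real.sqrt_pos.2 hc
    have hg : Tendsto
        (fun j : ℕ => A * ((j:ℝ) ^ m * Real.exp (-(Real.sqrt c * Real.sqrt j))))
        atTop (𝓝 0) := by
      have := (aux_pow_sqrt hsqrtc m).const_mul A
      simpa using this
    refine squeeze_zero'
      (Eventually.of_forall fun j =>
        mul_nonneg (pow_nonneg (Nat.cast_nonneg j) m) (hPnn j)) ?_ hg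
    filter_upwards [eventually_ge_atTop 2] with j hj
    have hIU := aux_int_upper hc hj
    calc (j:ℝ) ^ m * critP lam1 lam2 j
        ≤ (j:ℝ) ^ m * (c * ((Real.exp (c / 2) * I) *
            Real.exp (-(Real.sqrt c * Real.sqrt j)))) := by
          apply mul_le_mul_of_nonneg_left _ (pow_nonneg (Nat.cast_nonneg j) m)
          rw [hP]
          exact mul_le_mul_of_nonneg_left hIU hc.le
      _ = A * ((j:ℝ) ^ m * Real.exp (-(Real.sqrt c * Real.sqrt j))) := by ring
  · intro ε hε
    have hC : 0 < c * Real.exp (-c) := by positivity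
    have hexp_t : Tendsto (fun j : ℕ => ε * j - (c + 3) * Real.sqrt j) atTop atTop := by
      apply tendsto_atTop_mono' atTop ?_
        (Tendsto.const_mul_atTop (half_pos hε) tendsto_natCast_atTop_atTop)
      filter_upwards [eventually_ge_atTop ⌈(2 * (c + 3) / ε) ^ 2⌉₊] with j hj
      have hjr : (2 * (c + 3) / ε) ^ 2 ≤ (j:ℝ) :=
        le_trans (Nat.le_ceil _) (Nat.cast_le.2 hj)
      have ht : 2 * (c + 3) / ε ≤ Real.sqrt j := by
        have h := Real.sqrt_le_sqrt hjr
        rwa [Real.sqrt_sq (by positivity)] at h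
      rw [div_le_iff₀ hε] at ht
      have htsq : (Real.sqrt (j:ℝ)) ^ 2 = (j:ℝ) := Real.sq_sqrt (Nat.cast_nonneg j)
      nlinarith [mul_nonneg (Real.sqrt_nonneg (j:ℝ)) (sub_nonneg.2 ht),
        Real.sqrt_nonneg (j:ℝ)]
    have htends : Tendsto
        (fun j : ℕ => (c * Real.exp (-c)) * Real.exp (ε * j - (c + 3) * Real.sqrt j))
        atTop atTop :=
      Tendsto.const_mul_atTop hC (Real.tendsto_exp_atTop.comp hexp_t)
    apply tendsto_atTop_mono' atTop ?_ htends
    filter_upwards [eventually_ge_atTop 11664] with j hj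
    have hj4 : 4 ≤ j := by omega
    set t := Real.sqrt (j:ℝ) with ht_def
    have ht108 : 108 ≤ t := by
      have hjr : ((108:ℝ)) ^ 2 ≤ (j:ℝ) := by
        have : ((11664:ℕ):ℝ) ≤ (j:ℝ) := Nat.cast_le.2 hj
        norm_num at this ⊢
        linarith
      have h := Real.sqrt_le_sqrt hjr
      rwa [Real.sqrt_sq (by norm_num)] at h
    have hpos2 : (0:ℝ) < (2 + t) ^ 2 := by positivity
    have h2 : (2 + t) ^ 2 ≤ Real.exp t := aux_sq_le_exp ht108
    have h3 : Real.exp (-c) * Real.exp (-((c + 2) * t)) * Real.exp (-t) ≤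
        Real.exp (-c) * Real.exp (-((c + 2) * t)) / (2 + t) ^ 2 := by
      rw [div_eq_mul_inv]
      apply mul_le_mul_of_nonneg_left _ (by positivity)
      rw [Real.exp_neg]
      exact inv_anti₀ hpos2 h2
    have h4 : c * (Real.exp (-c) * Real.exp (-((c + 2) * t)) * Real.exp (-t)) ≤
        critP lam1 lam2 j := by
      rw [hP]
      exact mul_le_mul_of_nonneg_left (le_trans h3 (aux_int_lower hc hj4)) hc.le
    calc (c * Real.exp (-c)) * Real.exp (ε * j - (c + 3) * t)
        = Real.exp (ε * j) *
            (c * (Real.exp (-c) * Real.exp (-((c + 2) * t)) * Real.exp (-t))) := by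
          have e1 : c * Real.exp (-c) * Real.exp (ε * ↑j - (c + 3) * t)
              = c * Real.exp (-c + (ε * ↑j - (c + 3) * t)) := by
            rw [Real.exp_add]; ring
          have e2 : Real.exp (ε * ↑j) *
                (c * (Real.exp (-c) * Real.exp (-((c + 2) * t)) * Real.exp (-t)))
              = c * Real.exp (ε * ↑j + (-c + (-((c + 2) * t) + -t))) := by
            rw [Real.exp_add, Real.exp_add, Real.exp_add]; ring
          rw [e1, e2]
          congr 1
          ring
      _ ≤ Real.exp (ε * j) * critP lam1 lam2 j :=
          mul_le_mul_of_nonneg_left h4 (Real.exp_pos _).le
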